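/- Let F be a finite separable extension of 𝔽_2(T), let R be the integral closure of 𝔽_2[T] in F, and let c ∈ R be such that the polynomial g(X) = X² + X + c is irreducible over F. Let K = F[X]/(g) and let α ∈ K be the image of X. Then the integral closure of R in K equals R[α], the R-subalgebra of K generated by α. -/

import Mathlib

open Polynomial

set_option synthInstance.maxHeartbeats 1000000 in
/-- For a finite separable extension `F` of `𝔽₂(T)` with ring of integers
`R = integralClosure 𝔽₂[T] F`, and an irreducible Artin–Schreier polynomial
`g = X² + X + c` with `c ∈ R`, the integral closure of `R` in `K = F[X]/(g)`
is `R[α] = Algebra.adjoin R {α}`, where `α` is the image of `X`. -/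
theorem integralClosure_eq_adjoin_root_of_artinSchreier
    (F : Type) [Field F] [Algebra (RatFunc (ZMod 2)) F]
    [FiniteDimensional (RatFunc (ZMod 2)) F]
    [Algebra.IsSeparable (RatFunc (ZMod 2)) F] :
    letI : Algebra (Polynomial (ZMod 2)) F :=
      ((algebraMap (RatFunc (ZMod 2)) F).comp
        (algebraMap (Polynomial (ZMod 2)) (RatFunc (ZMod 2)))).toAlgebra
    ∀ c : integralClosure (Polynomial (ZMod 2)) F,
      ∀ g : Polynomial F, g = X ^ 2 + X + C (c : F) → Irreducible g →
      letI : Algebra (integralClosure (Polynomial (ZMod 2)) F) (AdjoinRoot g) :=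
        ((algebraMap F (AdjoinRoot g)).comp
          (algebraMap (integralClosure (Polynomial (ZMod 2)) F) F)).toAlgebra
      integralClosure (integralClosure (Polynomial (ZMod 2)) F) (AdjoinRoot g) =
        Algebra.adjoin (integralClosure (Polynomial (ZMod 2)) F) {AdjoinRoot.root g} := by
  letI _instAF : Algebra (Polynomial (ZMod 2)) F :=
    ((algebraMap (RatFunc (ZMod 2)) F).comp
      (algebraMap (Polynomial (ZMod 2)) (RatFunc (ZMod 2)))).toAlgebra
  intro c g hgeq hirr
  letI _instRK : Algebra (integralClosure (Polynomial (ZMod 2)) F) (AdjoinRoot g) :=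
    ((algebraMap F (AdjoinRoot g)).comp
      (algebraMap (integralClosure (Polynomial (ZMod 2)) F) F)).toAlgebra
  haveI : Fact (Irreducible g) := ⟨hirr⟩
  -- characteristic 2
  haveI : CharP F 2 :=
    charP_of_injective_ringHom
      (((algebraMap (RatFunc (ZMod 2)) F).comp
        (algebraMap (ZMod 2) (RatFunc (ZMod 2)))).injective) 2
  -- basic facts about g
  have hlow : (X + C (c : F)).degree < 2 :=
    lt_of_le_of_lt (degree_add_le _ _)
      (max_lt (by rw [degree_X]; decide) (lt_of_le_of_lt degree_C_le (by decide)))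
  have hX2 : ((X : F[X]) ^ 2).degree = 2 := degree_X_pow 2
  have hdeg : g.degree = 2 := by
    rw [hgeq, add_assoc, degree_add_eq_left_of_degree_lt (by rw [hX2]; exact hlow), hX2]
  have hgmonic : g.Monic := by
    rw [hgeq, add_assoc]
    exact monic_X_pow_add hlow
  have hg0 : g ≠ 0 := hgmonic.ne_zero
  have hnatdeg : g.natDegree = 2 := natDegree_eq_of_degree_eq_some hdeg
  -- scalar towers
  haveI tw1 := IsScalarTower.of_algebraMap_eq
    (R := Polynomial (ZMod 2)) (S := F) (A := AdjoinRoot g) (fun x => rfl)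
  haveI tw2 := IsScalarTower.of_algebraMap_eq
    (R := integralClosure (Polynomial (ZMod 2)) F) (S := F) (A := AdjoinRoot g)
    (fun x => rfl)
  haveI tw3 := IsScalarTower.of_algebraMap_eq
    (R := Polynomial (ZMod 2)) (S := integralClosure (Polynomial (ZMod 2)) F)
    (A := AdjoinRoot g) (fun x => rfl)
  -- the root
  have hroot : (AdjoinRoot.root g) ^ 2 + AdjoinRoot.root g
      + algebraMap F (AdjoinRoot g) (c : F) = 0 := by
    have h0 : (X ^ 2 + X + C (c : F)).eval₂ (AdjoinRoot.of g) (AdjoinRoot.root g) = 0 := by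
      rw [← hgeq]; exact AdjoinRoot.eval₂_root g
    rw [eval₂_add, eval₂_add, eval₂_pow, eval₂_X, eval₂_C] at h0
    rw [AdjoinRoot.algebraMap_eq]
    exact h0
  -- the root is integral over R
  have hαint : IsIntegral (integralClosure (Polynomial (ZMod 2)) F) (AdjoinRoot.root g) := by
    refine ⟨X ^ 2 + X + C c, ?_, ?_⟩
    · rw [add_assoc]
      apply monic_X_pow_add
      exact lt_of_le_of_lt (degree_add_le _ _)
        (max_lt (by rw [degree_X]; decide) (lt_of_le_of_lt degree_C_le (by decide)))
    · have hc : (algebraMap (integralClosure (Polynomial (ZMod 2)) F) (AdjoinRoot g)) c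
          = algebraMap F (AdjoinRoot g) (c : F) := rfl
      simp only [eval₂_add, eval₂_pow, eval₂_X, eval₂_C, hc]
      exact hroot
  -- power basis and finite dimensionality
  haveI : FiniteDimensional F (AdjoinRoot g) :=
    Module.Finite.of_basis (AdjoinRoot.powerBasis hg0).basis
  -- trace of the root is 1
  have htrα : Algebra.trace F (AdjoinRoot g) (AdjoinRoot.root g) = 1 := by
    have h1 :=
      PowerBasis.trace_gen_eq_nextCoeff_minpoly (AdjoinRoot.powerBasis hg0)
    rw [AdjoinRoot.powerBasis_gen] at h1
    rw [AdjoinRoot.minpoly_root hg0, hgmonic.leadingCoeff, inv_one, map_one, mul_one] at h1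
    have hnext : g.nextCoeff = 1 := by
      rw [nextCoeff_of_natDegree_pos (by rw [hnatdeg]; norm_num), hnatdeg]
      rw [hgeq]
      simp [coeff_X_pow]
    rw [h1, hnext]
    exact CharTwo.neg_eq 1
  have hfinrank : Module.finrank F (AdjoinRoot g) = 2 := by
    rw [(AdjoinRoot.powerBasis hg0).finrank, AdjoinRoot.powerBasis_dim, hnatdeg]
  -- main argument
  apply le_antisymm
  · -- integralClosure ≤ adjoin
    intro x hx
    have hxR : IsIntegral (integralClosure (Polynomial (ZMod 2)) F) x := hx
    have hxA : IsIntegral (Polynomial (ZMod 2)) x := isIntegral_trans x hxR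
    -- write x = of a + of b * root
    obtain ⟨p, rfl⟩ := AdjoinRoot.mk_surjective x
    have hmk : AdjoinRoot.mk g p = AdjoinRoot.mk g (p %ₘ g) := by
      rw [(AdjoinRoot.mk_eq_mk (f := g)).mpr]
      exact ⟨p /ₘ g, by rw [modByMonic_eq_sub_mul_div p g]; ring⟩
    have hrdeg : (p %ₘ g).degree ≤ 1 := by
      have h2 := degree_modByMonic_lt p hgmonic
      rw [hdeg] at h2
      exact Order.le_of_lt_succ (by exact_mod_cast h2)
    set a := (p %ₘ g).coeff 0 with ha
    set b := (p %ₘ g).coeff 1 with hb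
    have hxab : AdjoinRoot.mk g p
        = algebraMap F (AdjoinRoot g) a + algebraMap F (AdjoinRoot g) b * AdjoinRoot.root g := by
      rw [hmk]
      conv_lhs => rw [eq_X_add_C_of_degree_le_one hrdeg]
      simp [AdjoinRoot.algebraMap_eq, add_comm]
      rfl
    -- trace computation: trace x = b
    have htr : Algebra.trace F (AdjoinRoot g) (AdjoinRoot.mk g p) = b := by
      rw [hxab, map_add]
      have h2 : Algebra.trace F (AdjoinRoot g) (algebraMap F (AdjoinRoot g) a) = 0 := by
        rw [Algebra.trace_algebraMap, hfinrank, two_smul]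
        exact CharTwo.add_self_eq_zero a
      have h3 : Algebra.trace F (AdjoinRoot g)
          (algebraMap F (AdjoinRoot g) b * AdjoinRoot.root g) = b := by
        rw [← Algebra.smul_def, map_smul, htrα, smul_eq_mul, mul_one]
      rw [h2, h3, zero_add]
    -- b is integral over 𝔽₂[T]
    have hbA : IsIntegral (Polynomial (ZMod 2)) b := by
      have h4 := Algebra.isIntegral_trace (L := F) (F := AdjoinRoot g) hxA
      rwa [htr] at h4
    have hbR : b ∈ integralClosure (Polynomial (ZMod 2)) F := hbA
    -- a is integral over 𝔽₂[T]
    have hbαA : IsIntegral (Polynomial (ZMod 2))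
        (algebraMap F (AdjoinRoot g) b * AdjoinRoot.root g) := by
      have h1 : IsIntegral (Polynomial (ZMod 2)) (algebraMap F (AdjoinRoot g) b) :=
        (isIntegral_algebraMap_iff (algebraMap F (AdjoinRoot g)).injective).mpr hbA
      exact h1.mul (isIntegral_trans (AdjoinRoot.root g) hαint)
    have haK : IsIntegral (Polynomial (ZMod 2)) (algebraMap F (AdjoinRoot g) a) := by
      have h5 : algebraMap F (AdjoinRoot g) a
          = AdjoinRoot.mk g p - algebraMap F (AdjoinRoot g) b * AdjoinRoot.root g := by
        rw [hxab]; ring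
      rw [h5]
      exact hxA.sub hbαA
    have haA : IsIntegral (Polynomial (ZMod 2)) a :=
      (isIntegral_algebraMap_iff (algebraMap F (AdjoinRoot g)).injective).mp haK
    have haR : a ∈ integralClosure (Polynomial (ZMod 2)) F := haA
    -- conclude
    rw [hxab]
    have hmem : ∀ y : F, ∀ hy : y ∈ integralClosure (Polynomial (ZMod 2)) F,
        algebraMap F (AdjoinRoot g) y
          ∈ Algebra.adjoin (integralClosure (Polynomial (ZMod 2)) F) {AdjoinRoot.root g} := by
      intro y hy
      have h6 : algebraMap F (AdjoinRoot g) y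
          = algebraMap (integralClosure (Polynomial (ZMod 2)) F) (AdjoinRoot g) ⟨y, hy⟩ := rfl
      rw [h6]
      exact Subalgebra.algebraMap_mem _ _
    exact add_mem (hmem a haR)
      (mul_mem (hmem b hbR) (Algebra.subset_adjoin rfl))
  · -- adjoin ≤ integralClosure
    rw [Algebra.adjoin_le_iff]
    intro y hy
    rw [Set.mem_singleton_iff] at hy
    rw [hy]
    exact hαint
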